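/- The level set Γ_{λ,h,μ} = {(x,y) ∈ ℝ⁴ : H_λ(x,y) = h, M(x,y) = μ} is nonempty if and only if μ ∈ [-h/λ, h/λ], for any λ > 0, h > 0, μ ∈ ℝ. -/

import Mathlib

open Real

lemma euclid_sq_norm (x : EuclideanSpace ℝ (Fin 2)) : ‖x‖ ^ (2:ℕ) = x 0 ^ 2 + x 1 ^ 2 := by
  rw [EuclideanSpace.norm_eq, Real.sq_sqrt (by positivity)]
  simp [Fin.sum_univ_two, sq_abs]

/-- For `λ > 0`, `h > 0`, `μ ∈ ℝ`, the level set
`Γ_{λ,h,μ} = {(x,y) : H_λ(x,y) = h, M(x,y) = μ}` is nonempty iff `μ ∈ [-h/λ, h/λ]`. -/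
theorem level_set_nonempty_iff (p q lam h mu : ℝ) (hp : 1 < p) (hq : q = p / (p - 1))
    (hlam : 0 < lam) (hh : 0 < h) :
    (∃ x y : EuclideanSpace ℝ (Fin 2),
        lam ^ p * ‖x‖ ^ p / p + ‖y‖ ^ q / q = h ∧
        x 0 * y 1 - x 1 * y 0 = mu) ↔
      mu ∈ Set.Icc (-(h / lam)) (h / lam) := by
  have hpq : p.HolderConjugate q := hq ▸ Real.HolderConjugate.conjExponent hp
  have hp0 : 0 < p := hpq.pos
  have hq0 : 0 < q := hpq.symm.pos
  have hinv : p⁻¹ + q⁻¹ = 1 := hpq.inv_add_inv_eq_one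
  constructor
  · rintro ⟨x, y, hE, hM⟩
    set a := ‖x‖ with ha_def
    set b := ‖y‖ with hb_def
    have ha : 0 ≤ a := norm_nonneg x
    have hb : 0 ≤ b := norm_nonneg y
    have hab : lam * (a * b) ≤ h := by
      have hy := Real.young_inequality_of_nonneg (mul_nonneg hlam.le ha) hb hpq
      rw [Real.mul_rpow hlam.le ha] at hy
      calc lam * (a * b) = lam * a * b := by ring
        _ ≤ lam ^ p * a ^ p / p + b ^ q / q := hy
        _ = h := hE
    have hx2 : a ^ 2 = x 0 ^ 2 + x 1 ^ 2 := euclid_sq_norm x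
    have hy2 : b ^ 2 = y 0 ^ 2 + y 1 ^ 2 := euclid_sq_norm y
    have hsq : mu ^ 2 ≤ (a * b) ^ 2 := by
      have hprod : (a * b) ^ 2 = (x 0 ^ 2 + x 1 ^ 2) * (y 0 ^ 2 + y 1 ^ 2) := by
        rw [mul_pow, hx2, hy2]
      rw [hprod, ← hM]
      nlinarith [sq_nonneg (x 0 * y 0 + x 1 * y 1)]
    have habs : |mu| ≤ a * b := by
      rw [abs_le]
      constructor <;> nlinarith [mul_nonneg ha hb]
    have hfin : |mu| ≤ h / lam := by
      rw [le_div_iff₀ hlam]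
      nlinarith
    rw [Set.mem_Icc]
    constructor
    · linarith [neg_abs_le mu]
    · linarith [le_abs_self mu]
  · rintro ⟨h1, h2⟩
    have hnu : |mu| ≤ h / lam := abs_le.mpr ⟨by linarith, h2⟩
    set f : ℝ → ℝ := fun t =>
      t * (h ^ (1/p) / lam) * ((q * h * (1 - t ^ p / p)) ^ (1/q)) with hf_def
    have hfc : Continuous f := by
      apply Continuous.mul
      · exact continuous_id.mul continuous_const
      · exact (Real.continuous_rpow_const (by positivity)).comp
          (continuous_const.mul
            (continuous_const.sub ((Real.continuous_rpow_const hp0.le).div_const p)))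
    have hf0 : f 0 = 0 := by simp [hf_def]
    have hf1 : f 1 = h / lam := by
      have h1p : (1:ℝ) ^ p = 1 := Real.one_rpow p
      have hqinv : q * (1 - 1/p) = 1 := by
        have hqi : 1 - 1/p = q⁻¹ := by rw [one_div]; linarith [hinv]
        rw [hqi]; field_simp
      have hin : q * h * (1 - (1:ℝ) ^ p / p) = h := by
        rw [h1p, show q * h * (1 - 1/p) = h * (q * (1 - 1/p)) by ring, hqinv, mul_one]
      simp only [hf_def, hin, one_mul]
      rw [div_mul_eq_mul_div, ← Real.rpow_add hh,
        show 1/p + 1/q = 1 by rw [one_div, one_div]; exact hinv, Real.rpow_one]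
    have hmem : |mu| ∈ Set.Icc (f 0) (f 1) := by
      rw [hf0, hf1]; exact ⟨abs_nonneg mu, hnu⟩
    obtain ⟨t, ht, hft⟩ := intermediate_value_Icc (by norm_num : (0:ℝ) ≤ 1)
      hfc.continuousOn hmem
    obtain ⟨ht0, ht1⟩ := ht
    set a : ℝ := t * (h ^ (1/p) / lam) with ha_def
    set B : ℝ := q * h * (1 - t ^ p / p) with hB_def
    set b : ℝ := B ^ (1/q) with hb_def
    have htp0 : 0 ≤ t ^ p := Real.rpow_nonneg ht0 p
    have htp1 : t ^ p ≤ 1 := Real.rpow_le_one ht0 ht1 hp0.le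
    have hBnn : 0 ≤ B := by
      have hdiv : t ^ p / p ≤ 1 / p := by
        exact div_le_div_of_nonneg_right htp1 hp0.le
      have hp1 : 1 / p ≤ 1 := by
        rw [div_le_one hp0]; linarith
      have : 0 ≤ 1 - t ^ p / p := by linarith
      positivity
    have ha0 : 0 ≤ a := by positivity
    have hb0 : 0 ≤ b := Real.rpow_nonneg hBnn _
    have hbq : b ^ q = B := by
      rw [hb_def, ← Real.rpow_mul hBnn, one_div, inv_mul_cancel₀ hq0.ne', Real.rpow_one]
    have hap : lam ^ p * a ^ p = t ^ p * h := by
      rw [ha_def, Real.mul_rpow ht0 (by positivity),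
        Real.div_rpow (Real.rpow_nonneg hh.le _) hlam.le,
        ← Real.rpow_mul hh.le, one_div, inv_mul_cancel₀ hp0.ne', Real.rpow_one]
      field_simp
    set c : ℝ := if 0 ≤ mu then b else -b with hc_def
    have hcb : |c| = b := by
      rw [hc_def]
      split_ifs <;> simp [abs_of_nonneg hb0]
    refine ⟨(WithLp.equiv 2 (Fin 2 → ℝ)).symm ![a, 0],
      (WithLp.equiv 2 (Fin 2 → ℝ)).symm ![0, c], ?_, ?_⟩
    · have hnx : ‖(WithLp.equiv 2 (Fin 2 → ℝ)).symm ![a, 0]‖ = a := by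
        rw [EuclideanSpace.norm_eq]
        simp only [WithLp.equiv_symm_apply, WithLp.ofLp_toLp, Fin.sum_univ_two]
        simp [Real.norm_eq_abs, sq_abs, Real.sqrt_sq_eq_abs, abs_of_nonneg ha0]
      have hny : ‖(WithLp.equiv 2 (Fin 2 → ℝ)).symm ![0, c]‖ = b := by
        rw [EuclideanSpace.norm_eq]
        simp only [WithLp.equiv_symm_apply, WithLp.ofLp_toLp, Fin.sum_univ_two]
        rw [show ‖(![0, c] : Fin 2 → ℝ) 0‖ ^ 2 + ‖(![0, c] : Fin 2 → ℝ) 1‖ ^ 2 = |c| ^ 2 by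
          simp [Real.norm_eq_abs]]
        rw [Real.sqrt_sq_eq_abs, abs_abs, hcb]
      rw [hnx, hny, hbq, hap, hB_def]
      field_simp
      ring
    · have hab : a * b = |mu| := hft
      simp only [WithLp.equiv_symm_apply, WithLp.ofLp_toLp]
      simp only [Matrix.cons_val_zero, Matrix.cons_val_one, Matrix.head_cons]
      rw [mul_zero, sub_zero]
      rw [hc_def]
      split_ifs with hsgn
      · rw [hab, abs_of_nonneg hsgn]
      · rw [mul_neg, hab, abs_of_neg (not_le.mp hsgn), neg_neg]
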